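/- Resetting-Hedge, which runs Hedge on alive experts and restarts after each night, achieves ranking regret at most √((m+1)·T·log K) against the best ordering, for K initial experts, T rounds, m nights, and losses in [0,1]. -/
import Mathlib


/-- **Resetting-Hedge achieves ranking regret `√((m+1)·T·log K)`.**
Rounds are partitioned into `m+1` days; `alive s` is the set of alive experts
on day `s`, `σ π s ∈ alive s` is the expert ordering `π` plays on day `s`, and
the restarted Hedge run on day `s` has classical regret at most
`√(|τ_s| log K)`.  Then the ranking regret against the best ordering is at most
`√((m+1)·T·log K)`. -/
theorem resetting_hedge_regret (K T m : ℕ) (hK : 1 ≤ K)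
    (τ : Fin (m + 1) → Finset (Fin T))
    (hdisj : ∀ s s', s ≠ s' → Disjoint (τ s) (τ s'))
    (hcover : ∀ t, ∃ s, t ∈ τ s)
    (alive : Fin (m + 1) → Finset (Fin K))
    (hne : ∀ s, (alive s).Nonempty)
    (lhat : Fin T → ℝ) (l : Fin K → Fin T → ℝ)
    (hloss : ∀ i t, l i t ∈ Set.Icc (0 : ℝ) 1)
    (σ : Equiv.Perm (Fin K) → Fin (m + 1) → Fin K)
    (hσ : ∀ π s, σ π s ∈ alive s)
    (hhedge : ∀ s,
      (∑ t ∈ τ s, lhat t)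
          - (alive s).inf' (hne s) (fun i => ∑ t ∈ τ s, l i t)
        ≤ Real.sqrt ((τ s).card * Real.log K)) :
    (∑ t, lhat t)
        - (⨅ π : Equiv.Perm (Fin K), ∑ s, ∑ t ∈ τ s, l (σ π s) t)
      ≤ Real.sqrt ((m + 1) * T * Real.log K) := by
  have hlogK : (0:ℝ) ≤ Real.log K := Real.log_nonneg (by exact_mod_cast hK)
  have huniv : (Finset.univ : Finset (Fin (m+1))).biUnion τ = Finset.univ := by
    apply Finset.eq_univ_of_forall
    intro t
    obtain ⟨s, hs⟩ := hcover t
    exact Finset.mem_biUnion.2 ⟨s, Finset.mem_univ s, hs⟩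
  have hpart : ∑ t, lhat t = ∑ s, ∑ t ∈ τ s, lhat t := by
    rw [← huniv, Finset.sum_biUnion]
    intro s _ s' _ h
    exact hdisj s s' h
  have hcard : ∑ s, ((τ s).card : ℝ) ≤ (T : ℝ) := by
    have : ∑ s, (τ s).card ≤ T := by
      rw [← Finset.card_biUnion (fun s _ s' _ h => hdisj s s' h), huniv]
      simp
    exact_mod_cast this
  -- step 1: bound by sum of per-day regrets
  have key : ∀ π : Equiv.Perm (Fin K),
      (∑ t, lhat t) - (∑ s, ∑ t ∈ τ s, l (σ π s) t)
        ≤ ∑ s, Real.sqrt ((τ s).card * Real.log K) := by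
    intro π
    have hπ : ∀ s, (alive s).inf' (hne s) (fun i => ∑ t ∈ τ s, l i t)
        ≤ ∑ t ∈ τ s, l (σ π s) t := fun s =>
      Finset.inf'_le _ (hσ π s)
    calc (∑ t, lhat t) - (∑ s, ∑ t ∈ τ s, l (σ π s) t)
        ≤ (∑ s, ∑ t ∈ τ s, lhat t)
            - ∑ s, (alive s).inf' (hne s) (fun i => ∑ t ∈ τ s, l i t) := by
          rw [hpart]
          gcongr with s _
          exact hπ s
      _ = ∑ s, ((∑ t ∈ τ s, lhat t)
            - (alive s).inf' (hne s) (fun i => ∑ t ∈ τ s, l i t)) := by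
          rw [Finset.sum_sub_distrib]
      _ ≤ ∑ s, Real.sqrt ((τ s).card * Real.log K) :=
          Finset.sum_le_sum fun s _ => hhedge s
  -- step 2: Cauchy-Schwarz
  have cs : ∑ s : Fin (m+1), Real.sqrt ((τ s).card * Real.log K)
      ≤ Real.sqrt ((m + 1) * T * Real.log K) := by
    have hsq : (∑ s : Fin (m+1), Real.sqrt ((τ s).card * Real.log K))^2
        ≤ (m+1) * ∑ s : Fin (m+1), ((τ s).card * Real.log K) := by
      have := sq_sum_le_card_mul_sum_sq
        (s := (Finset.univ : Finset (Fin (m+1))))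
        (f := fun s => Real.sqrt ((τ s).card * Real.log K))
      simp only [Real.sq_sqrt (mul_nonneg (Nat.cast_nonneg _) hlogK), Finset.card_univ,
        Fintype.card_fin, Nat.cast_add, Nat.cast_one] at this
      exact this
    have hsum : ∑ s : Fin (m+1), ((τ s).card * Real.log K)
        ≤ (T : ℝ) * Real.log K := by
      rw [← Finset.sum_mul]
      exact mul_le_mul_of_nonneg_right hcard hlogK
    have hnonneg : (0:ℝ) ≤ ∑ s : Fin (m+1), Real.sqrt ((τ s).card * Real.log K) :=
      Finset.sum_nonneg fun s _ => Real.sqrt_nonneg _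
    rw [show ((m:ℝ) + 1) * T * Real.log K = ((m:ℝ)+1) * ((T:ℝ) * Real.log K) by ring]
    refine (Real.le_sqrt hnonneg (by positivity)).2 ?_
    calc _ ≤ ((m:ℝ)+1) * ∑ s : Fin (m+1), ((τ s).card * Real.log K) := hsq
      _ ≤ _ := by
        apply mul_le_mul_of_nonneg_left hsum
        positivity
  -- conclude via infimum
  have hinf : (∑ t, lhat t) - Real.sqrt ((m + 1) * T * Real.log K)
      ≤ ⨅ π : Equiv.Perm (Fin K), ∑ s, ∑ t ∈ τ s, l (σ π s) t := by
    haveI : Nonempty (Equiv.Perm (Fin K)) := ⟨1⟩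
    apply le_ciInf
    intro π
    have := (key π).trans cs
    linarith
  linarith
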